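/- Let α > 0, s > 0, ω > 0, and suppose k := ω/s > √α. If ℓ ∈ ℤ and ν ∈ ℂ satisfy ν⁴ + α·ν² − s·ν + iωℓ = 0 and Re ν = 0, then ℓ = 0 and ν = 0. -/

import Mathlib

/-- For α > 0, s, ω > 0 with k = ω/s > √α, the only purely imaginary
root of ν⁴ + αν² − sν + iωℓ = 0 is ν = 0 with ℓ = 0. -/
theorem no_neutral_modes (α s ω : ℝ) (hα : 0 < α) (hs : 0 < s) (hω : 0 < ω)
    (hk : Real.sqrt α < ω / s) (ℓ : ℤ) (ν : ℂ)
    (hroot : ν ^ 4 + (α : ℂ) * ν ^ 2 - (s : ℂ) * ν + Complex.I * (ω : ℂ) * (ℓ : ℂ) = 0)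
    (hre : ν.re = 0) :
    ℓ = 0 ∧ ν = 0 := by
  set y := ν.im with hy
  have hre' := congrArg Complex.re hroot
  have him' := congrArg Complex.im hroot
  simp [Complex.ext_iff, pow_succ, Complex.add_re, Complex.mul_re, Complex.mul_im,
    Complex.sub_re, Complex.sub_im, hre, ← hy] at hre' him'
  -- hre' : y^4 - α*y^2 = 0 (in some form), him' : -s*y + ω*ℓ = 0
  have hyz : y = 0 := by
    by_contra h
    have h0 : y * y ≠ 0 := mul_ne_zero h h
    have hfac : (y * y - α) * (y * y) = 0 := by linear_combination hre'
    have hy2 : y ^ 2 = α := by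
      rcases mul_eq_zero.mp hfac with h' | h'
      · nlinarith
      · exact absurd h' h0
    have habs : |y| = Real.sqrt α := by
      rw [← Real.sqrt_sq_eq_abs, hy2]
    have hl : (ℓ : ℝ) = s * y / ω := by field_simp; linarith
    have hlabs : |(ℓ : ℝ)| < 1 := by
      rw [hl, abs_div, abs_mul, abs_of_pos hs, abs_of_pos hω, habs]
      rw [div_lt_one hω]
      calc s * Real.sqrt α < s * (ω / s) := by nlinarith
        _ = ω := by field_simp
    have hl0 : ℓ = 0 := by
      have h1 : (-1 : ℝ) < ℓ := (abs_lt.mp hlabs).1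
      have h2 : (ℓ : ℝ) < 1 := (abs_lt.mp hlabs).2
      have h1' : (-1 : ℤ) < ℓ := by exact_mod_cast h1
      have h2' : ℓ < 1 := by exact_mod_cast h2
      omega
    rw [hl0] at hl
    field_simp at hl
    simp at hl
    rcases hl with h' | h'
    · exact absurd h' (ne_of_gt hs)
    · exact h h'
  have hl0 : ℓ = 0 := by
    rw [hyz] at him'
    have : (ℓ : ℝ) = 0 := by
      rcases mul_eq_zero.mp (by linarith : ω * ℓ = 0) with h | h
      · exact absurd h (ne_of_gt hω)
      · exact h
    exact_mod_cast this
  exact ⟨hl0, Complex.ext hre hyz⟩
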